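/- Let X be a Hermitian d×d complex matrix and let μ > 0. Then Tr[h_μ(X)] ≤ ‖X‖₁ ≤ Tr[h_μ(X)] + μ·d/2. -/

import Mathlib

open Matrix BigOperators
open scoped ComplexOrder Classical

/-- Junk-valued positive semidefinite square root: for a positive semidefinite matrix it is
the PSD square root, otherwise it is `0`. -/
noncomputable def msqrt {n : Type*} [Fintype n] [DecidableEq n]
    (M : Matrix n n ℂ) : Matrix n n ℂ :=
  if h : M.PosSemidef then
    (h.1.eigenvectorUnitary : Matrix n n ℂ) *
      Matrix.diagonal ((↑) ∘ (Real.sqrt ·) ∘ h.1.eigenvalues) *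
      (star h.1.eigenvectorUnitary : Matrix n n ℂ)
  else 0

/-- The trace norm `‖M‖₁ = Tr √(Mᴴ M)` of a square complex matrix. -/
noncomputable def traceNorm {n : Type*} [Fintype n] [DecidableEq n]
    (M : Matrix n n ℂ) : ℝ :=
  (msqrt (Mᴴ * M)).trace.re

/-- The Huber penalty function `h_μ`. -/
noncomputable def huber (μ x : ℝ) : ℝ :=
  if |x| < μ then x ^ 2 / (2 * μ) else |x| - μ / 2

/-- Junk-valued matrix Huber function: for a Hermitian matrix it applies `h_μ` to the
eigenvalues through the spectral decomposition, otherwise it is `0`. -/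
noncomputable def mhuber {n : Type*} [Fintype n] [DecidableEq n]
    (μ : ℝ) (M : Matrix n n ℂ) : Matrix n n ℂ :=
  if h : M.IsHermitian then
    (h.eigenvectorUnitary : Matrix n n ℂ) *
      Matrix.diagonal (fun i => (huber μ (h.eigenvalues i) : ℂ)) *
      (h.eigenvectorUnitary : Matrix n n ℂ)ᴴ
  else 0

lemma trace_conj_unitary {d : ℕ} (U : Matrix.unitaryGroup (Fin d) ℂ)
    (D : Matrix (Fin d) (Fin d) ℂ) :
    ((U : Matrix (Fin d) (Fin d) ℂ) * D * (U : Matrix (Fin d) (Fin d) ℂ)ᴴ).trace = D.trace := by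
  rw [Matrix.trace_mul_cycle, ← Matrix.star_eq_conjTranspose,
    Matrix.UnitaryGroup.star_mul_self, one_mul]

lemma huber_le_abs {μ x : ℝ} (hμ : 0 < μ) : huber μ x ≤ |x| := by
  unfold huber
  split_ifs with h
  · rw [div_le_iff₀ (by linarith)]
    have hx : x ^ 2 = |x| * |x| := by
      rw [← abs_mul, ← pow_two]; exact (abs_of_nonneg (sq_nonneg x)).symm
    rw [hx]
    nlinarith [abs_nonneg x]
  · linarith

lemma abs_le_huber_add {μ x : ℝ} (hμ : 0 < μ) : |x| ≤ huber μ x + μ / 2 := by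
  unfold huber
  split_ifs with h
  · have hx : x ^ 2 = |x| * |x| := by
      rw [← abs_mul, ← pow_two]; exact (abs_of_nonneg (sq_nonneg x)).symm
    rw [hx]
    rw [div_add' _ _ _ (by positivity : (2:ℝ) * μ ≠ 0), le_div_iff₀ (by linarith)]
    nlinarith [sq_nonneg (|x| - μ)]
  · linarith

/-- For a Hermitian `d × d` matrix `X` and `μ > 0`:
`Tr[h_μ(X)] ≤ ‖X‖₁ ≤ Tr[h_μ(X)] + μ·d/2`. -/
theorem smoothTraceNorm_le_traceNorm_le {d : ℕ}
    (X : Matrix (Fin d) (Fin d) ℂ) (hX : X.IsHermitian)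
    (μ : ℝ) (hμ : 0 < μ) :
    (mhuber μ X).trace.re ≤ traceNorm X ∧
      traceNorm X ≤ (mhuber μ X).trace.re + μ * d / 2 := by
  set U := hX.eigenvectorUnitary with hU
  set lam := hX.eigenvalues with hlam
  have hXX : (Xᴴ * X).PosSemidef := Matrix.posSemidef_conjTranspose_mul_self X
  set S : Matrix (Fin d) (Fin d) ℂ :=
    (U : Matrix (Fin d) (Fin d) ℂ) * Matrix.diagonal (fun i => ((|lam i| : ℝ) : ℂ)) *
      (U : Matrix (Fin d) (Fin d) ℂ)ᴴ with hS
  have hSpsd : S.PosSemidef := by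
    apply Matrix.PosSemidef.mul_mul_conjTranspose_same
    refine Matrix.posSemidef_diagonal_iff.2 fun i => ?_
    exact_mod_cast Complex.zero_le_real.2 (abs_nonneg _)
  have hUU : (U : Matrix (Fin d) (Fin d) ℂ)ᴴ * (U : Matrix (Fin d) (Fin d) ℂ) = 1 := by
    rw [← Matrix.star_eq_conjTranspose]; exact Matrix.UnitaryGroup.star_mul_self U
  have key : ∀ D E : Matrix (Fin d) (Fin d) ℂ,
      ((U : Matrix (Fin d) (Fin d) ℂ) * D * (U : Matrix (Fin d) (Fin d) ℂ)ᴴ) *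
        ((U : Matrix (Fin d) (Fin d) ℂ) * E * (U : Matrix (Fin d) (Fin d) ℂ)ᴴ) =
      (U : Matrix (Fin d) (Fin d) ℂ) * (D * E) * (U : Matrix (Fin d) (Fin d) ℂ)ᴴ := by
    intro D E
    have h1 : ((U : Matrix (Fin d) (Fin d) ℂ) * D * (U : Matrix (Fin d) (Fin d) ℂ)ᴴ) *
        ((U : Matrix (Fin d) (Fin d) ℂ) * E * (U : Matrix (Fin d) (Fin d) ℂ)ᴴ) =
        (U : Matrix (Fin d) (Fin d) ℂ) *
          (D * (((U : Matrix (Fin d) (Fin d) ℂ)ᴴ * (U : Matrix (Fin d) (Fin d) ℂ)) * E)) *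
          (U : Matrix (Fin d) (Fin d) ℂ)ᴴ := by noncomm_ring
    rw [h1, hUU, one_mul, ← mul_assoc]
  have hsd : X = (U : Matrix (Fin d) (Fin d) ℂ) *
      Matrix.diagonal (fun i => ((lam i : ℝ) : ℂ)) * (U : Matrix (Fin d) (Fin d) ℂ)ᴴ := by
    conv_lhs => rw [hX.spectral_theorem]
    rfl
  have hSsq : S ^ 2 = Xᴴ * X := by
    rw [show Xᴴ = X from hX, pow_two, hS, key]
    conv_rhs => rw [hsd]
    rw [key, Matrix.diagonal_mul_diagonal, Matrix.diagonal_mul_diagonal]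
    have heq : (fun i => ((|lam i| : ℝ) : ℂ) * ((|lam i| : ℝ) : ℂ)) =
        fun i => ((lam i : ℝ) : ℂ) * ((lam i : ℝ) : ℂ) := by
      funext i; rw [← Complex.ofReal_mul, ← Complex.ofReal_mul, abs_mul_abs_self]
    rw [heq]
  have hmsqrt : msqrt (Xᴴ * X) = S := by
    rw [msqrt, dif_pos hXX]
    open scoped MatrixOrder in
    have h1 := hXX.1.cfc_eq Real.sqrt
    rw [IsHermitian.cfc, Unitary.conjStarAlgAut_apply] at h1
    open scoped MatrixOrder in
    calc _ = cfc Real.sqrt (Xᴴ * X) := by rw [h1]; rfl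
      _ = S := by rw [← cfcₙ_eq_cfc (hf0 := Real.sqrt_zero), ← CFC.sqrt_eq_real_sqrt _ hXX.nonneg, ← hSsq, CFC.sqrt_sq S hSpsd.nonneg]
  have htn : traceNorm X = ∑ i, |lam i| := by
    rw [traceNorm, hmsqrt, hS, trace_conj_unitary, Matrix.trace_diagonal,
      ← Complex.ofReal_sum]
    exact Complex.ofReal_re _
  have hhub : (mhuber μ X).trace.re = ∑ i, huber μ (lam i) := by
    rw [mhuber, dif_pos hX, trace_conj_unitary, Matrix.trace_diagonal,
      ← Complex.ofReal_sum]
    exact Complex.ofReal_re _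
  constructor
  · rw [htn, hhub]
    exact Finset.sum_le_sum fun i _ => huber_le_abs hμ
  · rw [htn, hhub]
    calc ∑ i, |lam i| ≤ ∑ _i : Fin d, (huber μ (lam _i) + μ / 2) :=
          Finset.sum_le_sum fun i _ => abs_le_huber_add hμ
      _ = ∑ i, huber μ (lam i) + μ * d / 2 := by
          rw [Finset.sum_add_distrib, Finset.sum_const, Finset.card_univ, Fintype.card_fin]
          ring
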